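/- Let 0 < ω < 1 and let a, b be real numbers with 0 ≤ a ≤ b. Then ((1+a)^{−ω} − (1+b)^{−ω})·(b⁴ − a⁴) ≥ ω·(1+b)^{−ω−1}·b³·(b − a)². -/

import Mathlib

lemma rpow_neg_lower {t ω : ℝ} (ht0 : 0 < t) (ht1 : t ≤ 1) (hω0 : 0 < ω) (hω1 : ω < 1) :
    1 + ω * (1 - t) ≤ t ^ (-ω) := by
  have hs : -1 ≤ t - 1 := by linarith
  have h1 : (1 + (t - 1)) ^ ω ≤ 1 + ω * (t - 1) :=
    rpow_one_add_le_one_add_mul_self hs hω0.le hω1.le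
  have h1' : t ^ ω ≤ 1 - ω * (1 - t) := by
    have : (1 : ℝ) + (t - 1) = t := by ring
    rw [this] at h1; linarith
  have hu : 0 < t ^ ω := Real.rpow_pos_of_pos ht0 _
  have hx : 0 ≤ ω * (1 - t) := mul_nonneg hω0.le (by linarith)
  have hx1 : ω * (1 - t) < 1 := by nlinarith
  rw [Real.rpow_neg ht0.le, ← one_div, le_div_iff₀ hu]
  nlinarith

/-- Discrete renormalised internal-energy dissipation bound: for `0 < ω < 1` and
`0 ≤ a ≤ b`, `((1+a)^{−ω} − (1+b)^{−ω})(b⁴ − a⁴) ≥ ω(1+b)^{−ω−1} b³ (b − a)²`. -/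
theorem renormalised_dissipation_bound (ω a b : ℝ) (hω0 : 0 < ω) (hω1 : ω < 1)
    (ha : 0 ≤ a) (hab : a ≤ b) :
    ((1 + a) ^ (-ω) - (1 + b) ^ (-ω)) * (b ^ 4 - a ^ 4)
      ≥ ω * (1 + b) ^ (-ω - 1) * b ^ 3 * (b - a) ^ 2 := by
  have hb0 : 0 ≤ b := ha.trans hab
  have hA : (0:ℝ) < 1 + a := by linarith
  have hB : (0:ℝ) < 1 + b := by linarith
  set P := (1 + a) ^ (-ω) with hP
  set Q := (1 + b) ^ (-ω) with hQ
  have hQ0 : 0 < Q := Real.rpow_pos_of_pos hB _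
  have ht0 : 0 < (1 + a) / (1 + b) := div_pos hA hB
  have ht1 : (1 + a) / (1 + b) ≤ 1 := (div_le_one hB).mpr (by linarith)
  have ht := rpow_neg_lower ht0 ht1 hω0 hω1
  rw [Real.div_rpow hA.le hB.le] at ht
  -- multiply by Q
  have hkey : Q * (1 + ω * (1 - (1 + a) / (1 + b))) ≤ P := by
    have := mul_le_mul_of_nonneg_left ht hQ0.le
    rwa [mul_comm Q ((1 + a) ^ (-ω) / (1 + b) ^ (-ω)), div_mul_cancel₀ _ (ne_of_gt hQ0)] at this
  have hpow : (1 + b) ^ (-ω - 1) = Q / (1 + b) := by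
    rw [show -ω - 1 = -ω + (-1) by ring, Real.rpow_add hB, Real.rpow_neg_one, ← hQ,
      div_eq_mul_inv]
  have hgrad : ω * (Q / (1 + b)) * (b - a) ≤ P - Q := by
    have hfrac : 1 - (1 + a) / (1 + b) = (b - a) / (1 + b) := by
      field_simp; ring
    rw [hfrac] at hkey
    have : Q * (1 + ω * ((b - a) / (1 + b))) = Q + ω * (Q / (1 + b)) * (b - a) := by
      field_simp
    linarith [this ▸ hkey]
  rw [hpow]
  have hC : 0 ≤ ω * (Q / (1 + b)) := mul_nonneg hω0.le (div_nonneg hQ0.le hB.le)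
  have hba : 0 ≤ b - a := by linarith
  have h2 : b ^ 3 * (b - a) ≤ b ^ 4 - a ^ 4 := by nlinarith [mul_nonneg (mul_nonneg ha hba) (add_nonneg (add_nonneg (mul_nonneg hb0 hb0) (mul_nonneg ha hb0)) (mul_nonneg ha ha))]
  have h1 : ω * (Q / (1 + b)) * (b - a) * (b ^ 4 - a ^ 4) ≤ (P - Q) * (b ^ 4 - a ^ 4) :=
    mul_le_mul_of_nonneg_right hgrad (by linarith [h2, mul_nonneg (pow_nonneg hb0 3) hba])
  have h3 : ω * (Q / (1 + b)) * (b - a) * (b ^ 3 * (b - a))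
      ≤ ω * (Q / (1 + b)) * (b - a) * (b ^ 4 - a ^ 4) :=
    mul_le_mul_of_nonneg_left h2 (mul_nonneg hC hba)
  calc ω * (Q / (1 + b)) * b ^ 3 * (b - a) ^ 2
      = ω * (Q / (1 + b)) * (b - a) * (b ^ 3 * (b - a)) := by ring
    _ ≤ (P - Q) * (b ^ 4 - a ^ 4) := h3.trans h1
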